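/- For each n ∈ ℕ, n ≥ 1, the function f(r) = r^{2n} - r^{2n+2} on [0,1) attains its supremum (1/(n+1))(n/(n+1))^n at r = √(n/(n+1)), and its range is the interval [0, (1/(n+1))(n/(n+1))^n]. Consequently, for the rank one operator A(f) = ⟨f, zⁿ⟩zⁿ on H²(𝔻), whose Berezin transform is Ã(λ) = (1-|λ|²)|λ|^{2n}, the Berezin range is [0, (1/(n+1))(n/(n+1))^n], which is convex in ℂ. -/

import Mathlib

lemma aux_bernoulli (n : ℕ) (u : ℝ) (hu1 : -1 ≤ u) (hu2 : u ≤ 1) :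
    (1 + u) ^ n * (1 - n * u) ≤ 1 := by
  have h1 : 1 - (n:ℝ) * u ≤ (1 - u) ^ n := by
    have := one_add_mul_le_pow (a := -u) (by linarith) n
    rw [← sub_eq_add_neg] at this; linarith
  have h0 : (0:ℝ) ≤ (1 + u) ^ n := pow_nonneg (by linarith) n
  calc (1 + u) ^ n * (1 - n * u) ≤ (1 + u) ^ n * (1 - u) ^ n :=
        mul_le_mul_of_nonneg_left h1 h0
    _ = (1 - u ^ 2) ^ n := by rw [← mul_pow]; ring_nf
    _ ≤ 1 := pow_le_one₀ (by nlinarith) (by nlinarith)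

lemma aux_key (n : ℕ) (hn : 1 ≤ n) (t : ℝ) (ht0 : 0 ≤ t) (ht1 : t ≤ 1) :
    t ^ n * (1 - t) ≤ ((n : ℝ) / (n+1)) ^ n * (1 / (n+1)) := by
  have hn0 : (0:ℝ) < n := by exact_mod_cast hn
  have hn1 : (0:ℝ) < (n:ℝ) + 1 := by linarith
  set u : ℝ := t * (n + 1) / n - 1 with hu
  have hu1 : -1 ≤ u := by
    have : 0 ≤ t * ((n:ℝ) + 1) / n := by positivity
    simp only [hu]; linarith
  have hu2 : u ≤ 1 := by
    have hnr : (1:ℝ) ≤ n := by exact_mod_cast hn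
    rw [hu, sub_le_iff_le_add, div_le_iff₀ hn0]
    nlinarith [mul_le_mul_of_nonneg_right ht1 hn1.le]
  have ht : t = (n:ℝ) * (1 + u) / (n + 1) := by
    field_simp [hu]
    rw [hu]; field_simp
    ring
  have heq : t ^ n * (1 - t)
      = ((n : ℝ) / (n+1)) ^ n * (1 / (n+1)) * ((1 + u) ^ n * (1 - n * u)) := by
    rw [ht]
    rw [div_pow, div_pow, mul_pow]
    field_simp
    ring
  rw [heq]
  have hb := aux_bernoulli n u hu1 hu2
  have hpos : (0:ℝ) ≤ ((n : ℝ) / (n+1)) ^ n * (1 / (n+1)) := by positivity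
  calc ((n : ℝ) / (n+1)) ^ n * (1 / (n+1)) * ((1 + u) ^ n * (1 - n * u))
      ≤ ((n : ℝ) / (n+1)) ^ n * (1 / (n+1)) * 1 := mul_le_mul_of_nonneg_left hb hpos
    _ = ((n : ℝ) / (n+1)) ^ n * (1 / (n+1)) := mul_one _

lemma aux_bound (n : ℕ) (hn : 1 ≤ n) (r : ℝ) (hr0 : 0 ≤ r) (hr1 : r ≤ 1) :
    r ^ (2*n) - r ^ (2*n+2) ≤ (1 / ((n:ℝ)+1)) * ((n : ℝ) / (n+1)) ^ n := by
  have h := aux_key n hn (r^2) (sq_nonneg r) (by nlinarith)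
  have e : r ^ (2*n) - r ^ (2*n+2) = (r^2) ^ n * (1 - r^2) := by
    rw [pow_add, pow_mul]; ring
  rw [e, mul_comm ((1:ℝ) / ((n:ℝ)+1))]
  exact h

theorem berezin_range_rank_one_zn_hardy (n : ℕ) (hn : 1 ≤ n) :
    (∀ r ∈ Set.Ico (0:ℝ) 1,
        r ^ (2*n) - r ^ (2*n+2) ≤ (1 / (n+1)) * ((n : ℝ) / (n+1)) ^ n) ∧
    (Real.sqrt ((n : ℝ) / (n+1))) ^ (2*n) - (Real.sqrt ((n : ℝ) / (n+1))) ^ (2*n+2)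
        = (1 / (n+1)) * ((n : ℝ) / (n+1)) ^ n ∧
    (fun r : ℝ => r ^ (2*n) - r ^ (2*n+2)) '' Set.Ico (0:ℝ) 1
        = Set.Icc 0 ((1 / (n+1)) * ((n : ℝ) / (n+1)) ^ n) ∧
    {z : ℂ | ∃ l : ℂ, ‖l‖ < 1 ∧ z = (((1 - ‖l‖ ^ 2) * ‖l‖ ^ (2*n) : ℝ) : ℂ)}
        = (fun x : ℝ => (x : ℂ)) '' Set.Icc 0 ((1 / (n+1)) * ((n : ℝ) / (n+1)) ^ n) ∧
    Convex ℝ {z : ℂ | ∃ l : ℂ, ‖l‖ < 1 ∧ z = (((1 - ‖l‖ ^ 2) * ‖l‖ ^ (2*n) : ℝ) : ℂ)} := by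
  have hn1 : (0:ℝ) < (n:ℝ) + 1 := by positivity
  set c : ℝ := (n:ℝ) / (n+1) with hc
  have hc0 : 0 ≤ c := by positivity
  have hc1 : c < 1 := by
    rw [hc, div_lt_one hn1]; linarith
  set M : ℝ := (1 / ((n:ℝ)+1)) * c ^ n with hM
  have hM0 : 0 ≤ M := by positivity
  -- Part 1
  have part1 : ∀ r ∈ Set.Ico (0:ℝ) 1,
      r ^ (2*n) - r ^ (2*n+2) ≤ M := by
    rintro r ⟨hr0, hr1⟩
    exact aux_bound n hn r hr0 hr1.le
  -- Part 2
  have part2 : (Real.sqrt c) ^ (2*n) - (Real.sqrt c) ^ (2*n+2) = M := by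
    have h1 : (Real.sqrt c) ^ (2*n) = c ^ n := by
      rw [pow_mul, Real.sq_sqrt hc0]
    have h2 : (Real.sqrt c) ^ (2*n+2) = c ^ (n+1) := by
      have : 2*n+2 = 2*(n+1) := by ring
      rw [this, pow_mul, Real.sq_sqrt hc0]
    have h3 : 1 - c = 1 / ((n:ℝ)+1) := by
      rw [hc]; field_simp
      ring
    rw [h1, h2, hM, pow_succ]
    nlinarith [h3]
  -- Part 3
  have part3 : (fun r : ℝ => r ^ (2*n) - r ^ (2*n+2)) '' Set.Ico (0:ℝ) 1
      = Set.Icc 0 M := by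
    apply Set.Subset.antisymm
    · rintro x ⟨r, ⟨hr0, hr1⟩, rfl⟩
      refine ⟨?_, part1 r ⟨hr0, hr1⟩⟩
      have : r ^ (2*n+2) ≤ r ^ (2*n) :=
        pow_le_pow_of_le_one hr0 hr1.le (by omega)
      simpa using this
    · have hsq1 : Real.sqrt c < 1 := by
        rw [show (1:ℝ) = Real.sqrt 1 from (Real.sqrt_one).symm]
        exact Real.sqrt_lt_sqrt hc0 hc1
      have hcont : ContinuousOn (fun r : ℝ => r ^ (2*n) - r ^ (2*n+2))
          (Set.Icc 0 (Real.sqrt c)) := (by continuity : Continuous _).continuousOn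
      have hiv := intermediate_value_Icc (Real.sqrt_nonneg c) hcont
      have hf0 : (0:ℝ) ^ (2*n) - (0:ℝ) ^ (2*n+2) = 0 := by
        simp [zero_pow (by omega : 2*n ≠ 0)]
      rw [hf0, part2] at hiv
      refine hiv.trans (Set.image_mono ?_)
      rintro r ⟨h0, h1⟩
      exact ⟨h0, lt_of_le_of_lt h1 hsq1⟩
  -- Part 4
  have part4 : {z : ℂ | ∃ l : ℂ, ‖l‖ < 1 ∧ z = (((1 - ‖l‖ ^ 2) * ‖l‖ ^ (2*n) : ℝ) : ℂ)}
      = (fun x : ℝ => (x : ℂ)) '' Set.Icc 0 M := by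
    apply Set.Subset.antisymm
    · rintro z ⟨l, hl, rfl⟩
      refine ⟨(1 - ‖l‖ ^ 2) * ‖l‖ ^ (2*n), ?_, rfl⟩
      have he : (1 - ‖l‖ ^ 2) * ‖l‖ ^ (2*n) = ‖l‖ ^ (2*n) - ‖l‖ ^ (2*n+2) := by
        rw [pow_add]; ring
      rw [he, ← part3]
      exact ⟨‖l‖, ⟨norm_nonneg l, hl⟩, rfl⟩
    · rintro z ⟨x, hx, rfl⟩
      rw [← part3] at hx
      obtain ⟨r, ⟨hr0, hr1⟩, hrx⟩ := hx
      refine ⟨(r : ℂ), ?_, ?_⟩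
      · rwa [Complex.norm_real, Real.norm_eq_abs, abs_of_nonneg hr0]
      · rw [Complex.norm_real, Real.norm_eq_abs, abs_of_nonneg hr0]
        rw [show (1 - r ^ 2) * r ^ (2*n) = r ^ (2*n) - r ^ (2*n+2) by rw [pow_add]; ring]
        exact congrArg Complex.ofReal hrx.symm
  refine ⟨part1, part2, part3, part4, ?_⟩
  rw [part4]
  have := (convex_Icc (0:ℝ) M).linear_image Complex.ofRealCLM.toLinearMap
  simpa using this
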